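/- arXiv:2412.16308 — 4 statements merged into one kernel-verified Lean document; each statement's English description precedes it below -/
import Mathlib

section
/- Let K be an algebraically closed field, n ≥ 1, f a nonzero Laurent polynomial in n variables over K, and p₁,…,p_r finitely many points of (Kˣ)ⁿ. Then there exists a nonzero Laurent polynomial h in n variables over K such that every t ∈ (Kˣ)ⁿ with h(t) ≠ 0 satisfies f(t·pᵢ) ≠ 0 for all i = 1,…,r, where t·pᵢ denotes the componentwise product. In particular there exists t ∈ (Kˣ)ⁿ with f(t·pᵢ) ≠ 0 for all i. -/
open scoped BigOperators

noncomputable section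

/-- The ring of Laurent polynomials in variables indexed by `σ` over `K`,
realized as the monoid algebra `K[x₁^{±1},…]` on the exponent group `σ → ℤ`. -/
abbrev LaurentPoly (K : Type*) [CommSemiring K] (σ : Type*) : Type _ :=
  AddMonoidAlgebra K (σ → ℤ)

variable {K : Type*} [Field K] {σ : Type*} [Fintype σ]

/-- `t ^ a = ∏ i, (t i) ^ (a i)` for a torus point `t ∈ (Kˣ)^σ` and `a ∈ ℤ^σ`. -/
def torusPow (t : σ → Kˣ) (a : σ → ℤ) : K :=
  ∏ i, ((t i ^ a i : Kˣ) : K)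

/-- Evaluation of a Laurent polynomial `f = ∑ a α_a x^a` at a point `t` of the
torus: `f(t) = ∑ a α_a t^a`. -/
def laurentEval (f : LaurentPoly K σ) (t : σ → Kˣ) : K :=
  f.coeff.sum fun a c => c * torusPow t a

/-- The twist `t*f = ∑ a α_a t^a x^a` of a Laurent polynomial by a torus point. -/
def laurentTwist (t : σ → Kˣ) (f : LaurentPoly K σ) : LaurentPoly K σ :=
  AddMonoidAlgebra.ofCoeff (f.coeff.sum fun a c => Finsupp.single a (c * torusPow t a))

/-- The height of a (prime) ideal: the supremum of lengths of chains of prime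
ideals strictly contained in it. -/
def idealHeight {R : Type*} [CommRing R] (P : Ideal R) : ℕ∞ :=
  Set.chainHeight {Q : Ideal R | Q.IsPrime ∧ Q < P} (· < ·)

/-- A family of Laurent polynomials meets properly if, for every subset `I` of
the index set, every minimal prime of the ideal generated by the corresponding
subfamily has height `#I`. -/
def MeetsProperly {k : ℕ} (g : Fin k → LaurentPoly K σ) : Prop :=
  ∀ I : Finset (Fin k), ∀ P ∈ (Ideal.span (g '' ↑I)).minimalPrimes,
    idealHeight P = I.card

lemma torusPow_ne_zero' (t : σ → Kˣ) (a : σ → ℤ) : torusPow t a ≠ 0 := by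
  have : torusPow t a = ((∏ i, t i ^ a i : Kˣ) : K) := by
    simp [torusPow]
  rw [this]; exact Units.ne_zero _

lemma torusPow_add' (t : σ → Kˣ) (a b : σ → ℤ) :
    torusPow t (a + b) = torusPow t a * torusPow t b := by
  simp [torusPow, Pi.add_apply, zpow_add, Units.val_mul, Finset.prod_mul_distrib]

lemma torusPow_mulPoint' (t p : σ → Kˣ) (a : σ → ℤ) :
    torusPow (fun j => t j * p j) a = torusPow t a * torusPow p a := by
  simp [torusPow, mul_zpow, Units.val_mul, Finset.prod_mul_distrib]

def torusPowHom' (t : σ → Kˣ) : Multiplicative (σ → ℤ) →* K where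
  toFun a := torusPow t (Multiplicative.toAdd a)
  map_one' := by simp [torusPow]
  map_mul' a b := torusPow_add' t _ _

def laurentEvalHom' (t : σ → Kˣ) : LaurentPoly K σ →ₐ[K] K :=
  AddMonoidAlgebra.lift K K (σ → ℤ) (torusPowHom' t)

lemma laurentEval_eq' (f : LaurentPoly K σ) (t : σ → Kˣ) :
    laurentEval f t = laurentEvalHom' t f := by
  rw [laurentEvalHom', AddMonoidAlgebra.lift_apply]
  simp [laurentEval, torusPowHom', smul_eq_mul]

lemma laurentEval_single' (a : σ → ℤ) (c : K) (t : σ → Kˣ) :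
    laurentEval (AddMonoidAlgebra.single a c) t = c * torusPow t a := by
  rw [laurentEval, AddMonoidAlgebra.coeff_single, Finsupp.sum_single_index]
  simp

lemma laurentTwist_apply' (p : σ → Kˣ) (f : LaurentPoly K σ) (a : σ → ℤ) :
    (laurentTwist p f).coeff a = f.coeff a * torusPow p a := by
  classical
  rw [laurentTwist, AddMonoidAlgebra.coeff_ofCoeff, Finsupp.sum_apply, Finsupp.sum_eq_single a]
  · simp
  · intro b hb hba
    simp [Finsupp.single_apply, hba]
  · intro h
    simp

lemma laurentTwist_ne_zero' (p : σ → Kˣ) {f : LaurentPoly K σ} (hf : f ≠ 0) :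
    laurentTwist p f ≠ 0 := by
  obtain ⟨a, ha⟩ := Finsupp.ne_iff.mp (mt AddMonoidAlgebra.coeff_eq_zero.mp hf)
  simp only [Finsupp.coe_zero, Pi.zero_apply] at ha
  refine mt AddMonoidAlgebra.coeff_eq_zero.mpr (Finsupp.ne_iff.mpr ⟨a, ?_⟩)
  rw [laurentTwist_apply']
  simpa using mul_ne_zero ha (torusPow_ne_zero' p a)

lemma laurentEval_twist' (p t : σ → Kˣ) (f : LaurentPoly K σ) :
    laurentEval (laurentTwist p f) t = laurentEval f (fun j => t j * p j) := by
  classical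
  rw [laurentTwist]
  rw [laurentEval_eq']
  rw [Finsupp.sum, AddMonoidAlgebra.ofCoeff_sum, map_sum]
  rw [laurentEval, Finsupp.sum]
  refine Finset.sum_congr rfl fun a _ => ?_
  rw [← laurentEval_eq', AddMonoidAlgebra.ofCoeff_single, laurentEval_single', torusPow_mulPoint']
  ring

lemma exists_laurentEval_ne_zero' [Infinite K] {n : ℕ}
    (g : LaurentPoly K (Fin n)) (hg : g ≠ 0) :
    ∃ t : Fin n → Kˣ, laurentEval g t ≠ 0 := by
  classical
  obtain ⟨N, hN⟩ : ∃ N : ℕ, ∀ a ∈ g.coeff.support, ∀ j, 0 ≤ a j + N := by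
    refine ⟨g.coeff.support.sup fun a => Finset.univ.sup fun j => (-(a j)).toNat, ?_⟩
    intro a ha j
    set M : ℕ := g.coeff.support.sup fun a => Finset.univ.sup fun j => (-(a j)).toNat with hM
    have h1 : (-(a j)).toNat ≤ M :=
      le_trans (Finset.le_sup (f := fun j => (-(a j)).toNat) (Finset.mem_univ j))
        (Finset.le_sup (f := fun a => Finset.univ.sup fun j => (-(a j)).toNat) ha)
    have h2 : -(a j) ≤ ((-(a j)).toNat : ℤ) := Int.self_le_toNat _
    have h3 : ((-(a j)).toNat : ℤ) ≤ (M : ℤ) := by exact_mod_cast h1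
    linarith
  set e : (Fin n → ℤ) → (Fin n →₀ ℕ) :=
    fun a => Finsupp.equivFunOnFinite.symm fun j => (a j + N).toNat with he
  have einj : ∀ a ∈ g.coeff.support, ∀ b ∈ g.coeff.support, e a = e b → a = b := by
    intro a ha b hb hab
    funext j
    have : (a j + N).toNat = (b j + N).toNat := by
      have := congrArg (fun s => s j) hab
      simpa [he] using this
    have h1 := hN a ha j
    have h2 := hN b hb j
    omega
  set P : MvPolynomial (Fin n) K :=
    ∑ a ∈ g.coeff.support, MvPolynomial.monomial (e a) (g.coeff a) with hPdef
  have hP : P ≠ 0 := by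
    obtain ⟨a0, ha0⟩ := Finsupp.support_nonempty_iff.mpr (mt AddMonoidAlgebra.coeff_eq_zero.mp hg)
    intro h0
    have hc : MvPolynomial.coeff (e a0) P = g.coeff a0 := by
      rw [hPdef, MvPolynomial.coeff_sum]
      rw [Finset.sum_eq_single a0]
      · simp [MvPolynomial.coeff_monomial]
      · intro b hb hba
        rw [MvPolynomial.coeff_monomial, if_neg]
        intro hbe
        exact hba (einj b hb a0 ha0 hbe)
      · intro h; exact absurd ha0 h
    rw [h0] at hc
    simp only [MvPolynomial.coeff_zero] at hc
    exact (Finsupp.mem_support_iff.mp ha0) hc.symm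
  have hQ : P * ∏ j, MvPolynomial.X j ≠ 0 :=
    mul_ne_zero hP (Finset.prod_ne_zero_iff.mpr fun j _ => MvPolynomial.X_ne_zero j)
  obtain ⟨x, hx⟩ : ∃ x : Fin n → K, MvPolynomial.eval x (P * ∏ j, MvPolynomial.X j) ≠ 0 := by
    by_contra hc
    push_neg at hc
    exact hQ (MvPolynomial.funext fun x => by simpa using hc x)
  have hxP : MvPolynomial.eval x P ≠ 0 := by
    intro h0
    apply hx
    simp [h0]
  have hxj : ∀ j, x j ≠ 0 := by
    intro j h0
    apply hx
    rw [map_mul, map_prod]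
    have : (∏ j, MvPolynomial.eval x (MvPolynomial.X j) : K) = 0 := by
      apply Finset.prod_eq_zero (Finset.mem_univ j)
      simp [h0]
    rw [this, mul_zero]
  set t : Fin n → Kˣ := fun j => Units.mk0 (x j) (hxj j) with ht
  refine ⟨t, ?_⟩
  have heval : MvPolynomial.eval x P = (∏ j, x j) ^ N * laurentEval g t := by
    rw [hPdef, map_sum, laurentEval, Finsupp.sum, Finset.mul_sum]
    refine Finset.sum_congr rfl fun a ha => ?_
    rw [MvPolynomial.eval_monomial]
    have hterm : (e a).prod (fun j m => x j ^ m) = (∏ j, x j) ^ N * torusPow t a := by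
      rw [Finsupp.prod_fintype _ _ (fun j => pow_zero _)]
      have : ∀ j, x j ^ (e a j) = x j ^ (N : ℤ) * x j ^ (a j) := by
        intro j
        have h1 : ((e a j : ℕ) : ℤ) = a j + N := by
          simp only [he, Finsupp.coe_equivFunOnFinite_symm]
          exact Int.toNat_of_nonneg (hN a ha j)
        rw [← zpow_natCast, h1, zpow_add₀ (hxj j)]
        ring
      rw [Finset.prod_congr rfl fun j _ => this j, Finset.prod_mul_distrib]
      congr 1
      · simp_rw [zpow_natCast]
        rw [Finset.prod_pow]
      · rw [torusPow]
        refine Finset.prod_congr rfl fun j _ => ?_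
        rw [Units.val_zpow_eq_zpow_val]
        simp [ht]
    rw [hterm]
    ring
  intro h0
  apply hxP
  rw [heval, h0, mul_zero]

/-- Over an algebraically closed field, given a nonzero Laurent
polynomial `f` and finitely many torus points `p₁,…,p_r`, there is a nonzero
Laurent polynomial `h` such that any torus point `t` with `h(t) ≠ 0` satisfies
`f(t·pᵢ) ≠ 0` for all `i`; in particular such a `t` exists. -/
theorem generic_twist_avoids_finite_set
    (K : Type*) [Field K] [IsAlgClosed K] (n : ℕ) (hn : 1 ≤ n)
    (f : LaurentPoly K (Fin n)) (hf : f ≠ 0)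
    (r : ℕ) (p : Fin r → Fin n → Kˣ) :
    (∃ h : LaurentPoly K (Fin n), h ≠ 0 ∧
      ∀ t : Fin n → Kˣ, laurentEval h t ≠ 0 →
        ∀ i : Fin r, laurentEval f (fun j => t j * p i j) ≠ 0) ∧
    ∃ t : Fin n → Kˣ, ∀ i : Fin r, laurentEval f (fun j => t j * p i j) ≠ 0 := by
  classical
  have main : ∃ h : LaurentPoly K (Fin n), h ≠ 0 ∧
      ∀ t : Fin n → Kˣ, laurentEval h t ≠ 0 →
        ∀ i : Fin r, laurentEval f (fun j => t j * p i j) ≠ 0 := by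
    refine ⟨∏ i : Fin r, laurentTwist (p i) f, ?_, ?_⟩
    · exact Finset.prod_ne_zero_iff.mpr fun i _ => laurentTwist_ne_zero' _ hf
    · intro t ht i
      have hev : laurentEval (∏ i : Fin r, laurentTwist (p i) f) t
          = ∏ i : Fin r, laurentEval f (fun j => t j * p i j) := by
        rw [laurentEval_eq', map_prod]
        exact Finset.prod_congr rfl fun i _ => by
          rw [← laurentEval_eq', laurentEval_twist']
      rw [hev] at ht
      exact Finset.prod_ne_zero_iff.mp ht i (Finset.mem_univ i)
  refine ⟨main, ?_⟩
  obtain ⟨h, hne, hprop⟩ := main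
  obtain ⟨t, ht⟩ := exists_laurentEval_ne_zero' h hne
  exact ⟨t, hprop t ht⟩
end
end

section
/- Let n ≥ 0 and let μ be an additive Haar measure on ℝⁿ (for instance the Lebesgue measure). For each i = 0,…,n let Q_i ⊂ ℝⁿ be a nonempty compact convex set, let (g_{i,j})_j be a sequence of continuous concave functions Q_i → ℝ, and let g_i : Q_i → ℝ be a concave function such that g_{i,j} → g_i uniformly on Q_i. For a nonempty subset I ⊆ {0,…,n} and functions h_i on Q_i, the sup-convolution ⊞_{i∈I} h_i is the function on the Minkowski sum ∑_{i∈I} Q_i given by (⊞_{i∈I} h_i)(x) = sup { ∑_{i∈I} h_i(y_i) : y_i ∈ Q_i for i ∈ I, ∑_{i∈I} y_i = x }, and the mixed integral is MI_μ(h₀,…,h_n) = ∑_{∅≠I⊆{0,…,n}} (−1)^{n+1−#I} ∫_{∑_{i∈I} Q_i} (⊞_{i∈I} h_i) dμ. Then lim_{j→∞} MI_μ(g_{0,j},…,g_{n,j}) = MI_μ(g₀,…,g_n). -/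
open scoped BigOperators
open MeasureTheory Filter

noncomputable section

variable {n : ℕ}

/-- The Minkowski sum `∑_{i ∈ I} Q i` of a family of subsets of `ℝⁿ`. -/
def minkowskiSum (Q : Fin (n + 1) → Set (Fin n → ℝ)) (I : Finset (Fin (n + 1))) :
    Set (Fin n → ℝ) :=
  {x | ∃ y : Fin (n + 1) → (Fin n → ℝ), (∀ i ∈ I, y i ∈ Q i) ∧ ∑ i ∈ I, y i = x}

/-- The sup-convolution `⊞_{i ∈ I} h i` on the Minkowski sum `∑_{i ∈ I} Q i`:
`x ↦ sup { ∑_{i ∈ I} h i (y i) : y i ∈ Q i, ∑_{i ∈ I} y i = x }`. -/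
def supConvOn (Q : Fin (n + 1) → Set (Fin n → ℝ))
    (h : Fin (n + 1) → (Fin n → ℝ) → ℝ) (I : Finset (Fin (n + 1)))
    (x : Fin n → ℝ) : ℝ :=
  sSup {s : ℝ | ∃ y : Fin (n + 1) → (Fin n → ℝ),
    (∀ i ∈ I, y i ∈ Q i) ∧ (∑ i ∈ I, y i = x) ∧ s = ∑ i ∈ I, h i (y i)}

/-- The mixed integral
`MI_μ(h₀,…,h_n) = ∑_{∅ ≠ I ⊆ {0,…,n}} (−1)^{n+1−#I} ∫_{∑_{i∈I} Q i} ⊞_{i∈I} h i dμ`. -/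
def mixedIntegral (μ : Measure (Fin n → ℝ)) (Q : Fin (n + 1) → Set (Fin n → ℝ))
    (h : Fin (n + 1) → (Fin n → ℝ) → ℝ) : ℝ :=
  ∑ I ∈ Finset.univ.powerset.filter (fun I : Finset (Fin (n + 1)) => I.Nonempty),
    (-1 : ℝ) ^ (n + 1 - I.card) * ∫ x in minkowskiSum Q I, supConvOn Q h I x ∂μ


namespace MIaux

variable (Q : Fin (n + 1) → Set (Fin n → ℝ)) (h : Fin (n + 1) → (Fin n → ℝ) → ℝ)
  (I : Finset (Fin (n + 1))) (x : Fin n → ℝ)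

def convSet : Set ℝ :=
  {s : ℝ | ∃ y : Fin (n + 1) → (Fin n → ℝ),
    (∀ i ∈ I, y i ∈ Q i) ∧ (∑ i ∈ I, y i = x) ∧ s = ∑ i ∈ I, h i (y i)}

lemma supConv_eq : supConvOn Q h I x = sSup (convSet Q h I x) := rfl

variable {Q h I x}

lemma convSet_nonempty (hx : x ∈ minkowskiSum Q I) : (convSet Q h I x).Nonempty := by
  obtain ⟨y, hy, hs⟩ := hx
  exact ⟨∑ i ∈ I, h i (y i), y, hy, hs, rfl⟩

lemma bddAbove_convSet {C : Fin (n + 1) → ℝ}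
    (hC : ∀ i ∈ I, ∀ z ∈ Q i, h i z ≤ C i) : BddAbove (convSet Q h I x) := by
  refine ⟨∑ i ∈ I, C i, ?_⟩
  rintro s ⟨y, hy, -, rfl⟩
  exact Finset.sum_le_sum fun i hi => hC i hi _ (hy i hi)

lemma minkowskiSum_eq_image :
    minkowskiSum Q I =
      (fun z : (I : Set (Fin (n+1))).Elem → (Fin n → ℝ) => ∑ i, z i) ''
        Set.univ.pi (fun i : (I : Set (Fin (n+1))).Elem => Q i) := by
  ext x
  constructor
  · rintro ⟨y, hy, rfl⟩
    refine ⟨fun i => y i, fun i _ => hy i i.2, ?_⟩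
    exact Finset.sum_coe_sort I y
  · rintro ⟨z, hz, rfl⟩
    refine ⟨fun i => if hi : i ∈ I then z ⟨i, hi⟩ else 0, fun i hi => by simpa [hi] using hz ⟨i, hi⟩ (Set.mem_univ _), ?_⟩
    rw [← Finset.sum_coe_sort I]
    exact Finset.sum_congr rfl fun i _ => by simp [i.2]

lemma isCompact_minkowskiSum (hQcomp : ∀ i, IsCompact (Q i)) :
    IsCompact (minkowskiSum Q I) := by
  rw [minkowskiSum_eq_image]
  have hcont : Continuous (fun z : (I : Set (Fin (n+1))).Elem → (Fin n → ℝ) => ∑ i, z i) :=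
    continuous_finset_sum _ fun i _ => continuous_apply i
  exact IsCompact.image (isCompact_univ_pi (fun i : (I : Set (Fin (n+1))).Elem => hQcomp i)) hcont

lemma nonempty_minkowskiSum (hQne : ∀ i, (Q i).Nonempty) :
    (minkowskiSum Q I).Nonempty := by
  refine ⟨∑ i ∈ I, (hQne i).choose, fun i => (hQne i).choose, fun i _ => (hQne i).choose_spec, rfl⟩

lemma convex_minkowskiSum (hQconv : ∀ i, Convex ℝ (Q i)) :
    Convex ℝ (minkowskiSum Q I) := by
  rintro x ⟨y1, hy1, rfl⟩ x' ⟨y2, hy2, rfl⟩ a b ha hb hab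
  refine ⟨a • y1 + b • y2, fun i hi => hQconv i (hy1 i hi) (hy2 i hi) ha hb hab, ?_⟩
  simp [Finset.sum_add_distrib, ← Finset.smul_sum]

end MIaux

-- continuation, appended into namespace MIaux later
section Part2
open MIaux
variable {n : ℕ} {Q : Fin (n + 1) → Set (Fin n → ℝ)} {h h₁ h₂ : Fin (n + 1) → (Fin n → ℝ) → ℝ}
  {I : Finset (Fin (n + 1))} {x : Fin n → ℝ}

lemma abs_supConv_le {C : Fin (n + 1) → ℝ}
    (hC : ∀ i ∈ I, ∀ z ∈ Q i, |h i z| ≤ C i) (hx : x ∈ minkowskiSum Q I) :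
    |supConvOn Q h I x| ≤ ∑ i ∈ I, C i := by
  rw [supConv_eq, abs_le]
  constructor
  · obtain ⟨y, hy, hs⟩ := hx
    have hmem : (∑ i ∈ I, h i (y i)) ∈ convSet Q h I x := ⟨y, hy, hs, rfl⟩
    have h1 : -∑ i ∈ I, C i ≤ ∑ i ∈ I, h i (y i) := by
      rw [← Finset.sum_neg_distrib]
      exact Finset.sum_le_sum fun i hi => (abs_le.1 (hC i hi _ (hy i hi))).1
    exact h1.trans (le_csSup (bddAbove_convSet fun i hi z hz => (abs_le.1 (hC i hi z hz)).2) hmem)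
  · refine csSup_le (convSet_nonempty hx) ?_
    rintro s ⟨y, hy, -, rfl⟩
    exact Finset.sum_le_sum fun i hi => (abs_le.1 (hC i hi _ (hy i hi))).2

lemma supConv_le_supConv_add {ε : ℝ} {C : Fin (n + 1) → ℝ}
    (hC : ∀ i ∈ I, ∀ z ∈ Q i, h₂ i z ≤ C i)
    (hd : ∀ i ∈ I, ∀ z ∈ Q i, h₁ i z ≤ h₂ i z + ε) (hx : x ∈ minkowskiSum Q I) :
    supConvOn Q h₁ I x ≤ supConvOn Q h₂ I x + I.card * ε := by
  rw [supConv_eq, supConv_eq]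
  refine csSup_le (convSet_nonempty hx) ?_
  rintro s ⟨y, hy, hs, rfl⟩
  have h1 : ∑ i ∈ I, h₁ i (y i) ≤ ∑ i ∈ I, (h₂ i (y i) + ε) :=
    Finset.sum_le_sum fun i hi => hd i hi _ (hy i hi)
  rw [Finset.sum_add_distrib, Finset.sum_const, nsmul_eq_mul] at h1
  refine h1.trans (add_le_add ?_ le_rfl)
  exact le_csSup (bddAbove_convSet hC) ⟨y, hy, hs, rfl⟩

lemma concaveOn_supConv {C : Fin (n + 1) → ℝ} (hQconv : ∀ i, Convex ℝ (Q i))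
    (hconc : ∀ i ∈ I, ConcaveOn ℝ (Q i) (h i))
    (hC : ∀ i ∈ I, ∀ z ∈ Q i, h i z ≤ C i) :
    ConcaveOn ℝ (minkowskiSum Q I) (supConvOn Q h I) := by
  refine ⟨convex_minkowskiSum hQconv, ?_⟩
  rintro x hx x' hx' a b ha hb hab
  have hxx : a • x + b • x' ∈ minkowskiSum Q I :=
    convex_minkowskiSum hQconv hx hx' ha hb hab
  rcases ha.eq_or_lt with rfl | ha'
  · have hb1 : b = 1 := by linarith
    subst hb1; simp
  rcases hb.eq_or_lt with rfl | hb'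
  · have ha1 : a = 1 := by linarith
    subst ha1; simp
  have key : ∀ s ∈ convSet Q h I x, ∀ t ∈ convSet Q h I x',
      a * s + b * t ≤ sSup (convSet Q h I (a • x + b • x')) := by
    rintro s ⟨y1, hy1, hs1, rfl⟩ t ⟨y2, hy2, hs2, rfl⟩
    have hmem : (∑ i ∈ I, h i ((a • y1 + b • y2) i)) ∈ convSet Q h I (a • x + b • x') := by
      refine ⟨a • y1 + b • y2, fun i hi => hQconv i (hy1 i hi) (hy2 i hi) ha hb hab, ?_, rfl⟩
      simp [Finset.sum_add_distrib, ← Finset.smul_sum, hs1, hs2]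
    have h2 : a * (∑ i ∈ I, h i (y1 i)) + b * (∑ i ∈ I, h i (y2 i))
        ≤ ∑ i ∈ I, h i ((a • y1 + b • y2) i) := by
      rw [Finset.mul_sum, Finset.mul_sum, ← Finset.sum_add_distrib]
      refine Finset.sum_le_sum fun i hi => ?_
      simpa [smul_eq_mul] using (hconc i hi).2 (hy1 i hi) (hy2 i hi) ha hb hab
    exact h2.trans (le_csSup (bddAbove_convSet hC) hmem)
  have hA := convSet_nonempty (h := h) hx
  have hB := convSet_nonempty (h := h) hx'
  simp only [smul_eq_mul, supConv_eq]
  have h1 : sSup (convSet Q h I x) ≤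
      (sSup (convSet Q h I (a • x + b • x')) - b * sSup (convSet Q h I x')) / a := by
    refine csSup_le hA fun s hs => ?_
    rw [le_div_iff₀ ha']
    have h2 : sSup (convSet Q h I x') ≤
        (sSup (convSet Q h I (a • x + b • x')) - a * s) / b := by
      refine csSup_le hB fun t ht => ?_
      rw [le_div_iff₀ hb']
      linarith [key s hs t ht]
    rw [le_div_iff₀ hb'] at h2
    linarith
  rw [le_div_iff₀ ha'] at h1
  linarith

end Part2

section Part3
open MIaux
variable {n : ℕ} {Q : Fin (n + 1) → Set (Fin n → ℝ)} {h : Fin (n + 1) → (Fin n → ℝ) → ℝ}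
  {I : Finset (Fin (n + 1))}

lemma aesm_supConv (μ : Measure (Fin n → ℝ)) [μ.IsAddHaarMeasure]
    (hQcomp : ∀ i, IsCompact (Q i)) (hQconv : ∀ i, Convex ℝ (Q i))
    (hconc : ConcaveOn ℝ (minkowskiSum Q I) (supConvOn Q h I)) :
    AEStronglyMeasurable (supConvOn Q h I) (μ.restrict (minkowskiSum Q I)) := by
  set S := minkowskiSum Q I
  have hScomp : IsCompact S := isCompact_minkowskiSum hQcomp
  have hSconv : Convex ℝ S := convex_minkowskiSum hQconv
  have hfr : μ (frontier S) = 0 := hSconv.addHaar_frontier μ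
  have h0 : μ (S \ interior S) = 0 := by
    rw [← hScomp.isClosed.frontier_eq]; exact hfr
  have hae : S =ᵐ[μ] interior S := by
    refine (MeasureTheory.ae_eq_set).2 ⟨h0, ?_⟩
    rw [Set.diff_eq_empty.2 interior_subset]
    exact measure_empty
  rw [Measure.restrict_congr_set hae]
  exact hconc.continuousOn_interior.aestronglyMeasurable measurableSet_interior
end Part3

section Part4
open MIaux

lemma integral_supConv_tendsto {n : ℕ}
    (μ : Measure (Fin n → ℝ)) [μ.IsAddHaarMeasure]
    (Q : Fin (n + 1) → Set (Fin n → ℝ))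
    (hQne : ∀ i, (Q i).Nonempty) (hQcomp : ∀ i, IsCompact (Q i))
    (hQconv : ∀ i, Convex ℝ (Q i))
    (gseq : ℕ → Fin (n + 1) → (Fin n → ℝ) → ℝ) (g : Fin (n + 1) → (Fin n → ℝ) → ℝ)
    (hseqconc : ∀ j i, ConcaveOn ℝ (Q i) (gseq j i))
    (hseqcont : ∀ j i, ContinuousOn (gseq j i) (Q i))
    (hgconc : ∀ i, ConcaveOn ℝ (Q i) (g i))
    (hunif : ∀ i, TendstoUniformlyOn (fun j => gseq j i) (g i) atTop (Q i))
    (I : Finset (Fin (n + 1))) :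
    Tendsto (fun j => ∫ x in minkowskiSum Q I, supConvOn Q (gseq j) I x ∂μ) atTop
      (nhds (∫ x in minkowskiSum Q I, supConvOn Q g I x ∂μ)) := by
  have hgcont : ∀ i, ContinuousOn (g i) (Q i) := fun i =>
    (hunif i).continuousOn (Filter.Eventually.of_forall fun j => hseqcont j i).frequently
  choose C hC using fun i => (hQcomp i).exists_bound_of_continuousOn (hgcont i)
  have hCg : ∀ i ∈ I, ∀ z ∈ Q i, g i z ≤ C i := fun i _ z hz =>
    (le_abs_self _).trans (by simpa [Real.norm_eq_abs] using hC i z hz)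
  have hSmeas : MeasurableSet (minkowskiSum Q I) :=
    (isCompact_minkowskiSum hQcomp).isClosed.measurableSet
  have hfin : μ (minkowskiSum Q I) < ⊤ := (isCompact_minkowskiSum hQcomp).measure_lt_top
  have huε : ∀ ε : ℝ, 0 < ε → ∀ᶠ j in atTop, ∀ i, ∀ z ∈ Q i,
      dist (g i z) (gseq j i z) < ε := fun ε hε =>
    eventually_all.2 fun i => (Metric.tendstoUniformlyOn_iff.1 (hunif i)) ε hε
  refine tendsto_integral_filter_of_dominated_convergence
    (fun _ => ∑ i ∈ I, (C i + 1)) ?_ ?_ ?_ ?_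
  · refine Filter.Eventually.of_forall fun j => ?_
    choose C' hC' using fun i => (hQcomp i).exists_bound_of_continuousOn (hseqcont j i)
    refine aesm_supConv μ hQcomp hQconv ?_
    exact concaveOn_supConv (C := C') hQconv (fun i _ => hseqconc j i)
      (fun i _ z hz => (le_abs_self _).trans (by simpa [Real.norm_eq_abs] using hC' i z hz))
  · filter_upwards [huε 1 one_pos] with j hj
    refine (ae_restrict_iff' hSmeas).2 (Filter.Eventually.of_forall fun x hx => ?_)
    rw [Real.norm_eq_abs]
    refine abs_supConv_le (fun i _ z hz => ?_) hx
    have h1 := hj i z hz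
    rw [Real.dist_eq] at h1
    have h2 : |g i z| ≤ C i := by simpa [Real.norm_eq_abs] using hC i z hz
    calc |gseq j i z| = |g i z + (gseq j i z - g i z)| := by ring_nf
      _ ≤ |g i z| + |gseq j i z - g i z| := abs_add_le _ _
      _ ≤ C i + 1 := by rw [abs_sub_comm]; linarith
  · exact MeasureTheory.integrableOn_const hfin.ne
  · refine (ae_restrict_iff' hSmeas).2 (Filter.Eventually.of_forall fun x hx => ?_)
    rw [Metric.tendsto_atTop]
    intro ε hε
    set ε' := ε / (2 * (I.card + 1)) with hε'def
    have hε' : 0 < ε' := by positivity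
    have hcard : (I.card : ℝ) * ε' < ε := by
      have h1 : (I.card : ℝ) * ε' ≤ ((I.card : ℝ) + 1) * ε' := by nlinarith
      have h2 : ((I.card : ℝ) + 1) * ε' = ε / 2 := by
        rw [hε'def]; field_simp
      linarith
    obtain ⟨N, hN⟩ := Filter.eventually_atTop.1 (huε ε' hε')
    refine ⟨N, fun j hj => ?_⟩
    have hjd := hN j hj
    have key1 : supConvOn Q (gseq j) I x ≤ supConvOn Q g I x + I.card * ε' := by
      refine supConv_le_supConv_add hCg (fun i hi z hz => ?_) hx
      have h1 := hjd i z hz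
      rw [Real.dist_eq] at h1
      have h2 := abs_lt.1 h1
      linarith [h2.1, h2.2]
    have key2 : supConvOn Q g I x ≤ supConvOn Q (gseq j) I x + I.card * ε' := by
      refine supConv_le_supConv_add (C := fun i => C i + ε') (fun i hi z hz => ?_)
        (fun i hi z hz => ?_) hx
      · show gseq j i z ≤ C i + ε'
        have h1 := hjd i z hz
        rw [Real.dist_eq] at h1
        have h2 := abs_lt.1 h1
        have h3 := hCg i hi z hz
        linarith [h2.1, h2.2]
      · have h1 := hjd i z hz
        rw [Real.dist_eq] at h1
        have h2 := abs_lt.1 h1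
        linarith [h2.1, h2.2]
    rw [Real.dist_eq, abs_sub_lt_iff]
    constructor <;> linarith
end Part4

/-- The mixed integral of `n+1` concave functions on nonempty
compact convex bodies of `ℝⁿ`, with respect to an additive Haar measure, is
continuous under uniform convergence of its concave arguments. -/
theorem mixedIntegral_tendsto_of_tendstoUniformlyOn
    (n : ℕ) (μ : Measure (Fin n → ℝ)) [μ.IsAddHaarMeasure]
    (Q : Fin (n + 1) → Set (Fin n → ℝ))
    (hQne : ∀ i, (Q i).Nonempty) (hQcomp : ∀ i, IsCompact (Q i))
    (hQconv : ∀ i, Convex ℝ (Q i))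
    (gseq : ℕ → Fin (n + 1) → (Fin n → ℝ) → ℝ) (g : Fin (n + 1) → (Fin n → ℝ) → ℝ)
    (hseqconc : ∀ j i, ConcaveOn ℝ (Q i) (gseq j i))
    (hseqcont : ∀ j i, ContinuousOn (gseq j i) (Q i))
    (hgconc : ∀ i, ConcaveOn ℝ (Q i) (g i))
    (hunif : ∀ i, TendstoUniformlyOn (fun j => gseq j i) (g i) atTop (Q i)) :
    Tendsto (fun j => mixedIntegral μ Q (gseq j)) atTop
      (nhds (mixedIntegral μ Q g)) := by
  simp only [mixedIntegral]
  refine tendsto_finset_sum _ fun I _ => ?_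
  exact (integral_supConv_tendsto μ Q hQne hQcomp hQconv gseq g hseqconc hseqcont hgconc
    hunif I).const_mul _
end
end

section
/- Let K be a field, n ≥ 1, and let f = ∑_a α_a x^a and g = ∑_a β_a x^a be irreducible Laurent polynomials in n variables over K such that supp(g) = supp(f) + m₀ for some m₀ ∈ ℤⁿ. Then for every t ∈ (Kˣ)ⁿ the following are equivalent: (i) f divides the twist t*g in K[x₁^{±1},…,x_n^{±1}]; (ii) α_m β_{m'+m₀} t^{m'+m₀} = α_{m'} β_{m+m₀} t^{m+m₀} for all m, m' ∈ ℤⁿ. Moreover, when these hold there exists λ ∈ Kˣ with t*g = λ x^{m₀} f. -/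
open scoped BigOperators

noncomputable section

variable {K : Type*} [Field K] {σ : Type*} [Fintype σ]

section Helpers

variable {K : Type*} [Field K] {A B : Type*} [AddCommGroup A] [DecidableEq A] [AddCommGroup B] [LinearOrder B] [IsOrderedAddMonoid B]

lemma myApply_add_of_max (D : A → B) (hD : Function.Injective D)
    (hadd : ∀ a b, D (a + b) = D a + D b)
    {p q : AddMonoidAlgebra K A} {ap aq : A}
    (hpm : ∀ a ∈ p.coeff.support, D a ≤ D ap) (hqm : ∀ a ∈ q.coeff.support, D a ≤ D aq) :
    (p * q).coeff (ap + aq) = p.coeff ap * q.coeff aq := by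
  classical
  simp_rw [AddMonoidAlgebra.coeff_mul, Finsupp.sum]
  rw [Finset.sum_eq_single ap, Finset.sum_eq_single aq, if_pos rfl]
  · refine fun b hb hne => if_neg fun he => ?_
    apply_fun D at he
    rw [hadd, hadd] at he
    exact (add_lt_add_right ((hqm b hb).lt_of_ne (hD.ne_iff.2 hne)) _).ne he
  · intro h; rw [if_pos rfl, Finsupp.notMem_support_iff.1 h, mul_zero]
  · refine fun a ha hne => Finset.sum_eq_zero fun b hb => if_neg fun he => ?_
    apply_fun D at he
    rw [hadd, hadd] at he
    exact (add_lt_add_of_lt_of_le ((hpm a ha).lt_of_ne (hD.ne_iff.2 hne)) (hqm b hb)).ne he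
  · refine fun h => Finset.sum_eq_zero fun b _ => ite_eq_right_iff.mpr fun _ => ?_
    rw [Finsupp.notMem_support_iff.mp h, zero_mul]

lemma mySupport_D_le (D : A → B) (hD : Function.Injective D)
    (hadd : ∀ a b, D (a + b) = D a + D b)
    {h f : AddMonoidAlgebra K A} (hf : f ≠ 0) (hh : h ≠ 0) {m₀ : A}
    (hs : (h * f).coeff.support = f.coeff.support.image (· + m₀)) :
    ∀ a ∈ h.coeff.support, D a ≤ D m₀ := by
  classical
  obtain ⟨ah, hah, hahm⟩ := Finset.exists_max_image h.coeff.support D (Finsupp.support_nonempty_iff.2 (mt AddMonoidAlgebra.coeff_eq_zero.1 hh))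
  obtain ⟨af, haf, hafm⟩ := Finset.exists_max_image f.coeff.support D (Finsupp.support_nonempty_iff.2 (mt AddMonoidAlgebra.coeff_eq_zero.1 hf))
  have hmem : ah + af ∈ (h * f).coeff.support := by
    rw [Finsupp.mem_support_iff, myApply_add_of_max D hD hadd hahm hafm]
    exact mul_ne_zero (Finsupp.mem_support_iff.1 hah) (Finsupp.mem_support_iff.1 haf)
  have h1 : D ah ≤ D m₀ := by
    rw [hs, Finset.mem_image] at hmem
    obtain ⟨a, ha, he⟩ := hmem
    have heq : D ah + D af = D a + D m₀ := by rw [← hadd, ← hadd, he]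
    have h3 : D ah + D af ≤ D m₀ + D af := heq.trans_le (by
      rw [add_comm (D m₀) (D af)]; exact add_le_add_left (hafm a ha) _)
    exact le_of_add_le_add_right h3
  have h4 : D m₀ ≤ D ah := by
    have hmem2 : af + m₀ ∈ (h * f).coeff.support := by
      rw [hs]; exact Finset.mem_image_of_mem _ haf
    obtain ⟨a, ha, b, hb, he⟩ := Finset.mem_add.1 (AddMonoidAlgebra.support_coeff_mul_subset h f hmem2)
    have heq : D af + D m₀ = D a + D b := by rw [← hadd, ← hadd, he]
    have h3 : D m₀ + D af ≤ D ah + D af := by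
      rw [add_comm (D m₀) (D af)]
      exact heq.trans_le (add_le_add (hahm a ha) (hafm b hb))
    exact le_of_add_le_add_right h3
  exact fun a ha => (hahm a ha).trans h1

lemma myEq_single_of_mul_support_eq (D : A → B) (hD : Function.Injective D)
    (hadd : ∀ a b, D (a + b) = D a + D b)
    {h f : AddMonoidAlgebra K A} (hf : f ≠ 0) (hh : h ≠ 0) {m₀ : A}
    (hs : (h * f).coeff.support = f.coeff.support.image (· + m₀)) :
    h = AddMonoidAlgebra.single m₀ (h.coeff m₀) := by
  have H1 := mySupport_D_le D hD hadd hf hh hs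
  have H2 := mySupport_D_le (fun a => -D a) (fun a b hab => hD (neg_injective hab))
    (fun a b => by beta_reduce; rw [hadd, neg_add]) hf hh hs
  refine AddMonoidAlgebra.coeff_injective (Finsupp.support_subset_singleton.mp fun a ha => ?_)
  have : D a = D m₀ := le_antisymm (H1 a ha) (neg_le_neg_iff.1 (H2 a ha))
  exact Finset.mem_singleton.2 (hD this)

end Helpers

/-- For irreducible Laurent polynomials `f`, `g` with
`supp(g) = supp(f) + m₀`, and any torus point `t`, `f` divides the twist `t*g`
iff the equations `α_m β_{m'+m₀} t^{m'+m₀} = α_{m'} β_{m+m₀} t^{m+m₀}` hold for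
all `m, m'`; in that case `t*g = λ x^{m₀} f` for some `λ ∈ Kˣ`. -/
theorem dvd_twist_iff_bad_locus_equations
    (K : Type*) [Field K] (n : ℕ) (hn : 1 ≤ n)
    (f g : LaurentPoly K (Fin n)) (hf : Irreducible f) (hg : Irreducible g)
    (m₀ : Fin n → ℤ) (hsupp : g.coeff.support = f.coeff.support.image (· + m₀)) :
    ∀ t : Fin n → Kˣ,
      (f ∣ laurentTwist t g ↔
        ∀ m m' : Fin n → ℤ,
          f.coeff m * (g.coeff (m' + m₀) * torusPow t (m' + m₀)) =
            f.coeff m' * (g.coeff (m + m₀) * torusPow t (m + m₀))) ∧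
      (f ∣ laurentTwist t g →
        ∃ l : Kˣ, laurentTwist t g = AddMonoidAlgebra.single m₀ (l : K) * f) := by
  intro t
  classical
  have hf0 : f ≠ 0 := hf.ne_zero
  have hg0 : g ≠ 0 := hg.ne_zero
  have hτ : ∀ a : Fin n → ℤ, torusPow t a ≠ 0 := fun a =>
    Finset.prod_ne_zero_iff.2 fun i _ => Units.ne_zero _
  have htw : ∀ b : Fin n → ℤ, (laurentTwist t g).coeff b = g.coeff b * torusPow t b := by
    intro b
    rw [laurentTwist, AddMonoidAlgebra.coeff_ofCoeff, Finsupp.sum_apply, Finsupp.sum]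
    simp_rw [Finsupp.single_apply]
    rw [Finset.sum_ite_eq']
    by_cases hb : b ∈ g.coeff.support
    · rw [if_pos hb]
    · rw [if_neg hb, Finsupp.notMem_support_iff.1 hb, zero_mul]
  have hsupptw : (laurentTwist t g).coeff.support = g.coeff.support := by
    ext b
    rw [Finsupp.mem_support_iff, Finsupp.mem_support_iff, htw, mul_ne_zero_iff]
    exact ⟨fun h => h.1, fun h => ⟨h, hτ b⟩⟩
  have htw0 : laurentTwist t g ≠ 0 := by
    refine mt AddMonoidAlgebra.coeff_eq_zero.2 (Finsupp.support_nonempty_iff.1 ?_)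
    rw [hsupptw]; exact Finsupp.support_nonempty_iff.2 (mt AddMonoidAlgebra.coeff_eq_zero.1 hg0)
  have dir2' : (∀ m m' : Fin n → ℤ,
        f.coeff m * (g.coeff (m' + m₀) * torusPow t (m' + m₀)) =
          f.coeff m' * (g.coeff (m + m₀) * torusPow t (m + m₀))) →
      ∃ l : Kˣ, laurentTwist t g = AddMonoidAlgebra.single m₀ (l : K) * f := by
    intro heq
    obtain ⟨ms, hms⟩ := Finsupp.support_nonempty_iff.2 (mt AddMonoidAlgebra.coeff_eq_zero.1 hf0)
    have hαs : f.coeff ms ≠ 0 := Finsupp.mem_support_iff.1 hms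
    have hgs : g.coeff (ms + m₀) ≠ 0 := by
      refine Finsupp.mem_support_iff.1 ?_
      rw [hsupp]; exact Finset.mem_image_of_mem _ hms
    set lam : K := g.coeff (ms + m₀) * torusPow t (ms + m₀) / f.coeff ms with hlam
    have hlam0 : lam ≠ 0 := div_ne_zero (mul_ne_zero hgs (hτ _)) hαs
    refine ⟨Units.mk0 lam hlam0, ?_⟩
    refine AddMonoidAlgebra.ext (Finsupp.ext fun b => ?_)
    rw [AddMonoidAlgebra.coeff_single_mul_apply, htw b, Units.val_mk0, neg_add_eq_sub]
    have hb := heq ms (b - m₀)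
    rw [sub_add_cancel] at hb
    rw [hlam, div_mul_eq_mul_div, eq_div_iff hαs]
    linear_combination hb
  have dir1 : f ∣ laurentTwist t g →
      ∀ m m' : Fin n → ℤ,
        f.coeff m * (g.coeff (m' + m₀) * torusPow t (m' + m₀)) =
          f.coeff m' * (g.coeff (m + m₀) * torusPow t (m + m₀)) := by
    rintro ⟨h, hhf⟩ m m'
    have hh0 : h ≠ 0 := by
      rintro rfl; rw [mul_zero] at hhf; exact htw0 hhf
    have hs : (h * f).coeff.support = f.coeff.support.image (· + m₀) := by
      rw [mul_comm, ← hhf, hsupptw, hsupp]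
    haveI hwf : WellFoundedLT (Fin n) := inferInstance
    letI instB : LinearOrder (Lex (Fin n → ℤ)) :=
      inferInstance
    have hsingle : h = AddMonoidAlgebra.single m₀ (h.coeff m₀) :=
      myEq_single_of_mul_support_eq (toLex : (Fin n → ℤ) → Lex (Fin n → ℤ))
        toLex.injective (fun _ _ => rfl) hf0 hh0 hs
    have heqc : ∀ b, g.coeff b * torusPow t b = h.coeff m₀ * f.coeff (b - m₀) := by
      intro b
      rw [← htw b, hhf, mul_comm f h]
      conv_lhs => rw [hsingle]
      rw [AddMonoidAlgebra.coeff_single_mul_apply, neg_add_eq_sub]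
    rw [heqc (m' + m₀), heqc (m + m₀), add_sub_cancel_right, add_sub_cancel_right]
    ring
  exact ⟨⟨dir1, fun heq => (dir2' heq).elim fun l hl => ⟨_, by rw [hl, mul_comm]⟩⟩,
    fun hd => dir2' (dir1 hd)⟩
end
end

section
/- Let K be a field, d ≥ 1 an integer, and u, w ∈ Kˣ with u^d = 1 and w^d = 1. Then there exists a pair of integers (a, b) ≠ (0, 0) with a² + b² ≤ 16·d such that u^a · w^b = 1. -/
/-- Given two `d`-th roots of unity `u`, `w` in a field, there
is a nonzero integer pair `(a, b)` with `a² + b² ≤ 16·d` and `uᵃ wᵇ = 1`. -/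
theorem exists_small_multiplicative_relation_of_roots_of_unity
    (K : Type*) [Field K] (d : ℕ) (hd : 1 ≤ d) (u w : Kˣ)
    (hu : u ^ d = 1) (hw : w ^ d = 1) :
    ∃ a b : ℤ, ¬(a = 0 ∧ b = 0) ∧ a ^ 2 + b ^ 2 ≤ 16 * (d : ℤ) ∧
      u ^ a * w ^ b = 1 := by
  haveI : NeZero d := ⟨by omega⟩
  haveI : Fintype (rootsOfUnity d K) := Fintype.ofFinite _
  set n := Nat.sqrt d with hn
  have hmaps : ∀ p ∈ Finset.range (n + 1) ×ˢ Finset.range (n + 1),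
      (⟨u ^ p.1 * w ^ p.2, by
        rw [mem_rootsOfUnity, mul_pow, ← pow_mul, ← pow_mul, mul_comm p.1 d,
          mul_comm p.2 d, pow_mul, pow_mul, hu, hw, one_pow, one_pow, one_mul]⟩ :
        rootsOfUnity d K) ∈ (Finset.univ : Finset (rootsOfUnity d K)) := by
    intro p _; exact Finset.mem_univ _
  have hcard : (Finset.univ : Finset (rootsOfUnity d K)).card <
      (Finset.range (n + 1) ×ˢ Finset.range (n + 1)).card := by
    rw [Finset.card_product, Finset.card_range, Finset.card_univ]
    calc Fintype.card (rootsOfUnity d K) ≤ d := by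
          rw [← Nat.card_eq_fintype_card]; exact card_rootsOfUnity K d
      _ < (n + 1) * (n + 1) := by
        have h := Nat.lt_succ_sqrt' d
        simp only [Nat.succ_eq_add_one, pow_two] at h
        exact h
  obtain ⟨p, hp, q, hq, hpq, heq⟩ :=
    Finset.exists_ne_map_eq_of_card_lt_of_maps_to hcard hmaps
  simp only [Finset.mem_product, Finset.mem_range] at hp hq
  have key : u ^ (p.1 : ℤ) * w ^ (p.2 : ℤ) = u ^ (q.1 : ℤ) * w ^ (q.2 : ℤ) := by
    have := congrArg Subtype.val heq
    simpa [zpow_natCast] using this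
  refine ⟨(p.1 : ℤ) - q.1, (p.2 : ℤ) - q.2, ?_, ?_, ?_⟩
  · rintro ⟨h1, h2⟩
    exact hpq (Prod.ext (by omega) (by omega))
  · have h1 : ((p.1 : ℤ) - q.1) ^ 2 ≤ (n : ℤ) ^ 2 := by
      have := hp.1; have := hq.1; nlinarith [hp.1, hq.1]
    have h2 : ((p.2 : ℤ) - q.2) ^ 2 ≤ (n : ℤ) ^ 2 := by
      nlinarith [hp.2, hq.2]
    have h3 : (n : ℤ) ^ 2 ≤ d := by
      rw [hn]; exact_mod_cast Nat.sqrt_le' d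
    nlinarith
  · rw [zpow_sub, zpow_sub, mul_mul_mul_comm, key, ← mul_inv, mul_inv_cancel]
end
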